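/- Let J ≥ 1 and let ρ_1, …, ρ_J ∈ (0,1) be pairwise distinct. Let m ≥ 1, h ≥ 1 be integers and N a seminorm on ℝ^{m+h+1} (coordinates indexed by i ∈ {−m,…,h}) satisfying condition (S): N(x) = 0 ⟺ x_{−m} = ⋯ = x_0 = 0. For j ∈ {1,…,J} and −m+1 ≤ k ≤ h define d_{j,k} ∈ ℝ^{m+h+1} by (d_{j,k})_i = ρ_j^{k−i} if k ≥ i and 0 otherwise, and set d_{0,−m} = (1,0,…,0). Let I = {−1,+1} × ({1,…,J}×{−m+1,…,h} ∪ {(0,−m)}) and let f : ℝ^{m+h+1} → ℝ^{m+1} be the projection f(x) = (x_{−m},…,x_0). Then for every (θ₀,j₀,k₀) ∈ I with 1 ≤ j₀ ≤ J and 0 ≤ k₀ ≤ h, and every (θ′,j′,k′) ∈ I: θ′ N(d_{j′,k′})^{-1} f(d_{j′,k′}) = θ₀ N(d_{j₀,k₀})^{-1} f(d_{j₀,k₀}) holds if and only if θ′ = θ₀, j′ = j₀ and 0 ≤ k′ ≤ h. -/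

import Mathlib

theorem stmt14 (J : ℕ) (hJ : 1 ≤ J) (ρ : ℕ → ℝ)
    (hρ : ∀ j, 1 ≤ j → j ≤ J → 0 < ρ j ∧ ρ j < 1)
    (hinj : ∀ j j', 1 ≤ j → j ≤ J → 1 ≤ j' → j' ≤ J → ρ j = ρ j' → j = j')
    (m h : ℕ) (hm : 1 ≤ m) (hh : 1 ≤ h)
    (N : Seminorm ℝ (EuclideanSpace ℝ (Fin (m + h + 1))))
    (hN : ∀ x : EuclideanSpace ℝ (Fin (m + h + 1)),
      N x = 0 ↔ ∀ i : Fin (m + h + 1), (i : ℕ) ≤ m → x i = 0)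
    (D : ℕ → ℤ → EuclideanSpace ℝ (Fin (m + h + 1)))
    (hD : ∀ j, 1 ≤ j → j ≤ J → ∀ k : ℤ, -(m : ℤ) + 1 ≤ k → k ≤ (h : ℤ) →
      ∀ i : Fin (m + h + 1),
        D j k i = if ((i : ℕ) : ℤ) - (m : ℤ) ≤ k
          then ρ j ^ (k + (m : ℤ) - ((i : ℕ) : ℤ)).toNat else 0)
    (hD0 : ∀ i : Fin (m + h + 1), D 0 (-(m : ℤ)) i = if (i : ℕ) = 0 then 1 else 0)
    (f : EuclideanSpace ℝ (Fin (m + h + 1)) → EuclideanSpace ℝ (Fin (m + 1)))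
    (hf : ∀ (x : EuclideanSpace ℝ (Fin (m + h + 1))) (i : Fin (m + 1)),
      f x i = x (Fin.castLE (by omega) i))
    (θ₀ : ℝ) (j₀ : ℕ) (k₀ : ℤ)
    (hθ₀ : θ₀ = -1 ∨ θ₀ = 1) (hj₀ : 1 ≤ j₀) (hj₀' : j₀ ≤ J)
    (hk₀ : 0 ≤ k₀) (hk₀' : k₀ ≤ (h : ℤ))
    (θ' : ℝ) (j' : ℕ) (k' : ℤ)
    (hθ' : θ' = -1 ∨ θ' = 1)
    (hI' : (1 ≤ j' ∧ j' ≤ J ∧ -(m : ℤ) + 1 ≤ k' ∧ k' ≤ (h : ℤ))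
        ∨ (j' = 0 ∧ k' = -(m : ℤ))) :
    (θ' * (N (D j' k'))⁻¹) • f (D j' k') = (θ₀ * (N (D j₀ k₀))⁻¹) • f (D j₀ k₀) ↔
      (θ' = θ₀ ∧ j' = j₀ ∧ 0 ≤ k' ∧ k' ≤ (h : ℤ)) := by
  obtain ⟨hρ0, hρ1⟩ := hρ j₀ hj₀ hj₀'
  -- N depends only on the first m+1 coordinates
  have hNcongr : ∀ x y : EuclideanSpace ℝ (Fin (m + h + 1)),
      (∀ i : Fin (m + h + 1), (i : ℕ) ≤ m → x i = y i) → N x = N y := by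
    intro x y hxy
    have h0 : N (x - y) = 0 := (hN _).2 (fun i hi => by
      have hx : x i - y i = 0 := by rw [hxy i hi]; ring
      simpa using hx)
    have h0' : N (y - x) = 0 := by
      rw [show y - x = -(x - y) by abel, map_neg_eq_map]; exact h0
    have h1 : N x ≤ N y := by
      calc N x = N (y + (x - y)) := by congr 1; abel
      _ ≤ N y + N (x - y) := map_add_le_add N _ _
      _ = N y := by rw [h0]; ring
    have h2 : N y ≤ N x := by
      calc N y = N (x + (y - x)) := by congr 1; abel
      _ ≤ N x + N (y - x) := map_add_le_add N _ _
      _ = N x := by rw [h0']; ring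
    linarith
  have hNpos : ∀ j, 1 ≤ j → j ≤ J → ∀ k : ℤ, -(m : ℤ) + 1 ≤ k → k ≤ (h : ℤ) →
      0 < N (D j k) := by
    intro j h1 h2 k h3 h4
    rcases (apply_nonneg N (D j k)).lt_or_eq with hlt | heq0
    · exact hlt
    · exfalso
      have hz := (hN _).1 heq0.symm ⟨0, by omega⟩ (by simp)
      rw [hD j h1 h2 k h3 h4, if_pos (by push_cast; omega)] at hz
      exact absurd hz (pow_ne_zero _ (hρ j h1 h2).1.ne')
  have hfD : ∀ j, 1 ≤ j → j ≤ J → ∀ k : ℤ, -(m : ℤ) + 1 ≤ k → k ≤ (h : ℤ) →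
      ∀ i : Fin (m + 1),
      f (D j k) i = if ((i : ℕ) : ℤ) - (m : ℤ) ≤ k
        then ρ j ^ (k + (m : ℤ) - ((i : ℕ) : ℤ)).toNat else 0 := by
    intro j h1 h2 k h3 h4 i
    rw [hf, hD j h1 h2 k h3 h4]
    simp [Fin.coe_castLE]
  have hN0pos := hNpos j₀ hj₀ hj₀' k₀ (by omega) hk₀'
  have hθ₀ne : θ₀ ≠ 0 := by rcases hθ₀ with h0 | h0 <;> rw [h0] <;> norm_num
  constructor
  · intro heq
    rcases hI' with ⟨hj'1, hj'J, hk'1, hk'2⟩ | ⟨hj'0, hk'0⟩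
    swap
    · exfalso
      subst hj'0 hk'0
      have e1 := congrArg (fun v => v (⟨1, by omega⟩ : Fin (m + 1))) heq
      simp only [PiLp.smul_apply, smul_eq_mul] at e1
      have hv : (((⟨1, by omega⟩ : Fin (m + 1)) : ℕ) : ℤ) = 1 := rfl
      have hL : f (D 0 (-(m : ℤ))) (⟨1, by omega⟩ : Fin (m + 1)) = 0 := by
        rw [hf, hD0]
        simp
      have hR : f (D j₀ k₀) (⟨1, by omega⟩ : Fin (m + 1))
          = ρ j₀ ^ (k₀ + (m : ℤ) - 1).toNat := by
        rw [hfD j₀ hj₀ hj₀' k₀ (by omega) hk₀']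
        simp only [hv]
        rw [if_pos (by omega)]
      rw [hL, hR, mul_zero] at e1
      exact (mul_ne_zero (mul_ne_zero hθ₀ne (inv_ne_zero hN0pos.ne'))
        (pow_ne_zero _ hρ0.ne')) e1.symm
    have hN'pos := hNpos j' hj'1 hj'J k' hk'1 hk'2
    by_cases hk'neg : k' < 0
    · exfalso
      have hib : (k' + (m : ℤ) + 1).toNat ≤ m := by omega
      have e1 := congrArg (fun v => v (⟨(k' + (m : ℤ) + 1).toNat, by omega⟩ : Fin (m + 1))) heq
      simp only [PiLp.smul_apply, smul_eq_mul] at e1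
      have hv : (((⟨(k' + (m : ℤ) + 1).toNat, by omega⟩ : Fin (m + 1)) : ℕ) : ℤ)
          = (((k' + (m : ℤ) + 1).toNat : ℕ) : ℤ) := rfl
      rw [hfD j' hj'1 hj'J k' hk'1 hk'2 _, hfD j₀ hj₀ hj₀' k₀ (by omega) hk₀' _,
        hv, if_neg (by omega), if_pos (by omega), mul_zero] at e1
      exact (mul_ne_zero (mul_ne_zero hθ₀ne (inv_ne_zero hN0pos.ne'))
        (pow_ne_zero _ hρ0.ne')) e1.symm
    push_neg at hk'neg
    obtain ⟨hρ'0, hρ'1⟩ := hρ j' hj'1 hj'J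
    have hθ'ne : θ' ≠ 0 := by rcases hθ' with h0 | h0 <;> rw [h0] <;> norm_num
    -- evaluate at coordinates m and m-1
    have e1 := congrArg (fun v => v (⟨m, by omega⟩ : Fin (m + 1))) heq
    have e2 := congrArg (fun v => v (⟨m - 1, by omega⟩ : Fin (m + 1))) heq
    simp only [PiLp.smul_apply, smul_eq_mul] at e1 e2
    rw [hfD j' hj'1 hj'J k' hk'1 hk'2 _, hfD j₀ hj₀ hj₀' k₀ (by omega) hk₀' _] at e1 e2
    have hv1 : (((⟨m, by omega⟩ : Fin (m + 1)) : ℕ) : ℤ) = (m : ℤ) := rfl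
    have hv2 : (((⟨m - 1, by omega⟩ : Fin (m + 1)) : ℕ) : ℤ) = ((m - 1 : ℕ) : ℤ) := rfl
    rw [hv1, if_pos (by omega), if_pos (by omega)] at e1
    rw [hv2, if_pos (by push_cast; omega), if_pos (by push_cast; omega)] at e2
    have hexp1 : (k' + (m : ℤ) - (m : ℤ)).toNat = k'.toNat := by omega
    have hexp1' : (k₀ + (m : ℤ) - (m : ℤ)).toNat = k₀.toNat := by omega
    have hexp2 : (k' + (m : ℤ) - ((m - 1 : ℕ) : ℤ)).toNat = k'.toNat + 1 := by
      push_cast; omega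
    have hexp2' : (k₀ + (m : ℤ) - ((m - 1 : ℕ) : ℤ)).toNat = k₀.toNat + 1 := by
      push_cast; omega
    rw [hexp1, hexp1'] at e1
    rw [hexp2, hexp2', pow_succ, pow_succ] at e2
    have hpne : θ' * (N (D j' k'))⁻¹ * ρ j' ^ k'.toNat ≠ 0 :=
      mul_ne_zero (mul_ne_zero hθ'ne (inv_ne_zero hN'pos.ne')) (pow_ne_zero _ hρ'0.ne')
    have hρeq : ρ j' = ρ j₀ := by
      refine mul_left_cancel₀ hpne ?_
      calc θ' * (N (D j' k'))⁻¹ * ρ j' ^ k'.toNat * ρ j'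
          = θ' * (N (D j' k'))⁻¹ * (ρ j' ^ k'.toNat * ρ j') := by ring
        _ = θ₀ * (N (D j₀ k₀))⁻¹ * (ρ j₀ ^ k₀.toNat * ρ j₀) := e2
        _ = θ₀ * (N (D j₀ k₀))⁻¹ * ρ j₀ ^ k₀.toNat * ρ j₀ := by ring
        _ = θ' * (N (D j' k'))⁻¹ * ρ j' ^ k'.toNat * ρ j₀ := by rw [← e1]
    have hjeq : j' = j₀ := hinj j' j₀ hj'1 hj'J hj₀ hj₀' hρeq
    refine ⟨?_, hjeq, hk'neg, hk'2⟩
    have hppos : 0 < ρ j' ^ k'.toNat * (N (D j' k'))⁻¹ :=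
      mul_pos (pow_pos hρ'0 _) (inv_pos.2 hN'pos)
    have hqpos : 0 < ρ j₀ ^ k₀.toNat * (N (D j₀ k₀))⁻¹ :=
      mul_pos (pow_pos hρ0 _) (inv_pos.2 hN0pos)
    rcases hθ' with h' | h' <;> rcases hθ₀ with h0 | h0 <;>
      rw [h', h0] at e1 ⊢ <;> linarith [e1, hppos, hqpos]
  · rintro ⟨hθ, hj, hk'0, hk'h⟩
    subst hθ hj
    have key : ∀ k : ℤ, 0 ≤ k → k ≤ (h : ℤ) →
        (N (D j' k))⁻¹ • f (D j' k) = (N (D j' 0))⁻¹ • f (D j' 0) := by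
      intro k hk1 hk2
      have hb1 : -(m : ℤ) + 1 ≤ k := by omega
      have hb0 : -(m : ℤ) + 1 ≤ (0 : ℤ) := by omega
      have h0h : (0 : ℤ) ≤ (h : ℤ) := by omega
      have hcpos : 0 < ρ j' ^ k.toNat := pow_pos (hρ j' hj₀ hj₀').1 _
      have hNval : N (D j' k) = ρ j' ^ k.toNat * N (D j' 0) := by
        have hcong : N (D j' k) = N ((ρ j' ^ k.toNat) • D j' 0) := by
          apply hNcongr
          intro i hi
          rw [hD j' hj₀ hj₀' k hb1 hk2 i, if_pos (by omega)]
          have hsm : ((ρ j' ^ k.toNat) • D j' 0) i = ρ j' ^ k.toNat * D j' 0 i := rfl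
          rw [hsm, hD j' hj₀ hj₀' 0 hb0 h0h i, if_pos (by omega), ← pow_add]
          congr 1
          omega
        rw [hcong, map_smul_eq_mul, Real.norm_eq_abs, abs_of_pos hcpos]
      have hfval : f (D j' k) = (ρ j' ^ k.toNat) • f (D j' 0) := by
        ext i
        have hsm : ((ρ j' ^ k.toNat) • f (D j' 0)) i = ρ j' ^ k.toNat * f (D j' 0) i := rfl
        rw [hsm, hfD j' hj₀ hj₀' k hb1 hk2 i, if_pos (by omega),
          hfD j' hj₀ hj₀' 0 hb0 h0h i, if_pos (by omega), ← pow_add]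
        congr 1
        omega
      rw [hNval, hfval, mul_inv, smul_smul]
      congr 1
      have hc0 : ρ j' ^ k.toNat ≠ 0 := hcpos.ne'
      have hN00 : N (D j' 0) ≠ 0 := (hNpos j' hj₀ hj₀' 0 (by omega) (by omega)).ne'
      field_simp
    rw [mul_smul, mul_smul, key k' hk'0 hk'h, key k₀ hk₀ hk₀']
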